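/- Let G be a k-regular graph on n vertices whose adjacency matrix A belongs to a symmetric association scheme, and let λ_min be the smallest eigenvalue of A. Then η°(G) = 2k/(k − λ_min), where η°(G) = min{ μ : μ ≥ 0, N ⪰ 0, diag(N) = μ·1, N_{ii}+N_{jj}−2N_{ij} ≥ 4 for all edges ij }. -/

import Mathlib

open Matrix

section AuxLemmas
set_option linter.unusedSectionVars false
variable {n : Type*} [Fintype n] [DecidableEq n]

lemma psd_smul_aux {c : ℝ} (hc : 0 ≤ c) {M : Matrix n n ℝ} (hM : M.PosSemidef) :
    (c • M).PosSemidef := by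
  refine Matrix.PosSemidef.of_dotProduct_mulVec_nonneg ?_ fun x => ?_
  · unfold Matrix.IsHermitian
    rw [conjTranspose_smul, hM.1]
    simp
  · rw [smul_mulVec, dotProduct_smul]
    exact mul_nonneg hc (hM.dotProduct_mulVec_nonneg x)

lemma psd_sum_aux {ι : Type*} (s : Finset ι) (f : ι → Matrix n n ℝ)
    (h : ∀ i ∈ s, (f i).PosSemidef) : (∑ i ∈ s, f i).PosSemidef :=
  Finset.sum_induction f _ (fun _ _ ha hb => ha.add hb) .zero h

lemma psd_diag_nonneg_aux {M : Matrix n n ℝ} (hM : M.PosSemidef) (x : n) : 0 ≤ M x x := by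
  exact hM.diag_nonneg

lemma psd_trace_mul_nonneg_aux {M N : Matrix n n ℝ} (hM : M.PosSemidef) (hN : N.PosSemidef) :
    0 ≤ (M * N).trace := by
  obtain ⟨B, rfl⟩ : ∃ B : Matrix n n ℝ, N = Bᴴ * B := by
    open scoped MatrixOrder in exact CStarAlgebra.nonneg_iff_eq_star_mul_self.mp hN.nonneg
  have h1 : (M * (Bᴴ * B)).trace = (B * M * Bᴴ).trace := by
    rw [← mul_assoc, trace_mul_cycle]
  rw [h1]
  have h2 := hM.mul_mul_conjTranspose_same B
  exact Finset.sum_nonneg fun x _ => psd_diag_nonneg_aux h2 x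

lemma trace_pos_aux {E : Matrix n n ℝ} (hsym : Eᵀ = E) (hidem : E * E = E)
    (hne : E ≠ 0) : 0 < E.trace := by
  have hEsq : E.trace = ∑ u, ∑ v, (E u v)^2 := by
    conv_lhs => rw [← hidem]
    simp only [Matrix.trace, Matrix.diag_apply, Matrix.mul_apply]
    refine Finset.sum_congr rfl fun u _ => Finset.sum_congr rfl fun v _ => ?_
    have : E v u = E u v := by conv_lhs => rw [← hsym, Matrix.transpose_apply]
    rw [this, sq]
  obtain ⟨u, v, huv⟩ : ∃ u v, E u v ≠ 0 := by
    by_contra hc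
    push_neg at hc
    exact hne (Matrix.ext fun u v => hc u v)
  rw [hEsq]
  refine Finset.sum_pos' (fun u _ => Finset.sum_nonneg fun v _ => sq_nonneg _)
    ⟨u, Finset.mem_univ u, ?_⟩
  exact Finset.sum_pos' (fun v _ => sq_nonneg _) ⟨v, Finset.mem_univ v, by positivity⟩

lemma spectral_decomp_aux {M : Matrix n n ℝ} (hM : M.IsHermitian) (t : ℝ) :
    M - t • 1 = (hM.eigenvectorUnitary : Matrix n n ℝ) *
      diagonal (fun i => hM.eigenvalues i - t) *
      (star (hM.eigenvectorUnitary : Matrix n n ℝ)) := by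
  have hu : (hM.eigenvectorUnitary : Matrix n n ℝ) *
      (star (hM.eigenvectorUnitary : Matrix n n ℝ)) = 1 :=
    Matrix.mem_unitaryGroup_iff.mp hM.eigenvectorUnitary.2
  have hd : diagonal (fun i => hM.eigenvalues i - t) =
      diagonal (RCLike.ofReal ∘ hM.eigenvalues) - t • (1 : Matrix n n ℝ) := by
    rw [smul_one_eq_diagonal, ← diagonal_sub]
    congr 1
  rw [hd, mul_sub, sub_mul, ← Unitary.conjStarAlgAut_apply (S := ℝ), ← hM.spectral_theorem]
  congr 1
  rw [mul_smul_comm, smul_mul_assoc, mul_one, hu]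

lemma psd_sub_smul_aux {M : Matrix n n ℝ} (hM : M.IsHermitian) [Nonempty n] :
    (M - (⨅ i, hM.eigenvalues i) • 1).PosSemidef := by
  rw [spectral_decomp_aux hM]
  refine (Matrix.posSemidef_diagonal_iff.mpr fun i => ?_).mul_mul_conjTranspose_same _
  have := ciInf_le (Set.finite_range hM.eigenvalues).bddBelow i
  linarith

lemma trace_eq_sum_eig_aux {M : Matrix n n ℝ} (hM : M.IsHermitian) :
    M.trace = ∑ i, hM.eigenvalues i := by
  conv_lhs => rw [hM.spectral_theorem, Unitary.conjStarAlgAut_apply]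
  rw [trace_mul_cycle]
  have hu : (star (hM.eigenvectorUnitary : Matrix n n ℝ)) *
      (hM.eigenvectorUnitary : Matrix n n ℝ) = 1 :=
    Matrix.mem_unitaryGroup_iff'.mp hM.eigenvectorUnitary.2
  rw [hu, one_mul, trace_diagonal]
  simp [RCLike.ofReal_real_eq_id]

lemma eig_le_of_psd_aux {M : Matrix n n ℝ} (hM : M.IsHermitian) (t : ℝ)
    (h : (M - t • 1).PosSemidef) (i : n) : t ≤ hM.eigenvalues i := by
  set v : n → ℝ := ⇑(hM.eigenvectorBasis i) with hv
  have hvv : v ⬝ᵥ v = 1 := by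
    have h1 : ‖hM.eigenvectorBasis i‖ = 1 := hM.eigenvectorBasis.orthonormal.1 i
    have h2 : (inner ℝ (hM.eigenvectorBasis i) (hM.eigenvectorBasis i) : ℝ) = 1 := by
      rw [real_inner_self_eq_norm_sq, h1]; norm_num
    rw [PiLp.inner_apply] at h2
    simpa [dotProduct, RCLike.inner_apply, mul_comm, hv, sq] using h2
  have h3 := h.dotProduct_mulVec_nonneg v
  rw [sub_mulVec, smul_mulVec, one_mulVec, hv, hM.mulVec_eigenvectorBasis,
    dotProduct_sub, dotProduct_smul, dotProduct_smul] at h3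
  simp only [star_trivial, smul_eq_mul, ← hv, hvv, mul_one] at h3
  linarith

end AuxLemmas

theorem eta_dual_eq_of_association_scheme
    {V : Type*} [Fintype V] [DecidableEq V] (d : ℕ)
    (A E : Fin (d + 1) → Matrix V V ℝ)
    (P Q : Matrix (Fin (d + 1)) (Fin (d + 1)) ℝ)
    (hA0 : A 0 = 1)
    (hAsym : ∀ i, (A i)ᵀ = A i)
    (hA01 : ∀ i u v, A i u v = 0 ∨ A i u v = 1)
    (hAsum : ∀ u v, ∑ i, A i u v = 1)
    (hAne : ∀ i, A i ≠ 0)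
    (hAmul : ∀ i j, A i * A j ∈ Submodule.span ℝ (Set.range A))
    (hAcomm : ∀ i j, A i * A j = A j * A i)
    (hE0 : E 0 = (Fintype.card V : ℝ)⁻¹ • Matrix.of (fun _ _ => (1 : ℝ)))
    (hEsym : ∀ i, (E i)ᵀ = E i)
    (hEmul : ∀ i j, E i * E j = if i = j then E i else 0)
    (hEsum : ∑ i, E i = 1)
    (hEne : ∀ i, E i ≠ 0)
    (hP : ∀ i, A i = ∑ l, P l i • E l)
    (hQ : ∀ i, E i = (Fintype.card V : ℝ)⁻¹ • ∑ l, Q l i • A l)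
    [Nonempty V]
    (G : SimpleGraph V) [DecidableRel G.Adj]
    (k : ℕ) (hreg : G.IsRegularOfDegree k) (hconn : G.Connected)
    (i₁ : Fin (d + 1)) (hi₁ : G.adjMatrix ℝ = A i₁)
    (hherm : (G.adjMatrix ℝ).IsHermitian) :
    sInf {μ : ℝ | 0 ≤ μ ∧ ∃ N : Matrix V V ℝ, N.PosSemidef ∧ (∀ v, N v v = μ) ∧
        ∀ u v, G.Adj u v → N u u + N v v - 2 * N u v ≥ 4}
      = 2 * (k : ℝ) / ((k : ℝ) - ⨅ i, hherm.eigenvalues i) := by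
  classical
  have hn0 : 0 < Fintype.card V := Fintype.card_pos
  set n : ℕ := Fintype.card V with hn
  -- nonnegativity of scheme entries
  have hA01' : ∀ j u v, 0 ≤ A j u v := by
    intro j u v
    rcases hA01 j u v with h | h <;> rw [h] <;> norm_num
  -- diagonal entries vanish off class 0
  have hdiag : ∀ j, j ≠ 0 → ∀ u, A j u u = 0 := by
    intro j hj u
    have hsum := hAsum u u
    have h0 : A 0 u u = 1 := by rw [hA0]; exact Matrix.one_apply_eq u
    have herase : ∑ i ∈ Finset.univ.erase 0, A i u u = 0 := by
      have h2 : A 0 u u + ∑ i ∈ Finset.univ.erase 0, A i u u = ∑ i, A i u u :=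
        Finset.add_sum_erase Finset.univ (fun i => A i u u) (Finset.mem_univ 0)
      rw [hsum, h0] at h2
      linarith
    have := (Finset.sum_eq_zero_iff_of_nonneg (fun i _ => hA01' i u u)).mp herase j
      (Finset.mem_erase.mpr ⟨hj, Finset.mem_univ j⟩)
    exact this
  -- edge entries vanish off class i₁
  have hedgeA : ∀ u v, G.Adj u v → A i₁ u v = 1 := by
    intro u v huv
    have : G.adjMatrix ℝ u v = 1 := by simp [huv]
    rw [hi₁] at this
    exact this
  have hedge : ∀ u v, G.Adj u v → ∀ j, j ≠ i₁ → A j u v = 0 := by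
    intro u v huv j hj
    have hsum := hAsum u v
    have herase : ∑ i ∈ Finset.univ.erase i₁, A i u v = 0 := by
      have h2 : A i₁ u v + ∑ i ∈ Finset.univ.erase i₁, A i u v = ∑ i, A i u v :=
        Finset.add_sum_erase Finset.univ (fun i => A i u v) (Finset.mem_univ i₁)
      rw [hsum, hedgeA u v huv] at h2
      linarith
    exact (Finset.sum_eq_zero_iff_of_nonneg (fun i _ => hA01' i u v)).mp herase j
      (Finset.mem_erase.mpr ⟨hj, Finset.mem_univ j⟩)
  -- k ≥ 1
  have hk1 : 1 ≤ k := by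
    have hAdne : G.adjMatrix ℝ ≠ 0 := by rw [hi₁]; exact hAne i₁
    obtain ⟨u, v, huv⟩ : ∃ u v, G.adjMatrix ℝ u v ≠ 0 := by
      by_contra hc
      push_neg at hc
      exact hAdne (Matrix.ext fun u v => hc u v)
    have hadj : G.Adj u v := by
      by_contra hA
      exact huv (by simp [hA])
    have := (G.degree_pos_iff_exists_adj u).mpr ⟨v, hadj⟩
    rw [hreg u] at this
    omega
  have hk : (0:ℝ) < k := by exact_mod_cast hk1
  -- minimal eigenvalue of the scheme
  obtain ⟨l₀, hl₀⟩ := Finite.exists_min (fun l => P l i₁)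
  set lam : ℝ := P l₀ i₁ with hlam
  -- E l facts
  have hEe : ∀ l, E l * E l = E l := fun l => by simpa using hEmul l l
  have hEherm : ∀ l, (E l)ᴴ = E l := by
    intro l
    ext u v
    rw [conjTranspose_apply, star_trivial]
    have h := congrFun (congrFun (hEsym l) u) v
    rw [transpose_apply] at h
    exact h
  have hEpsd : ∀ l, (E l).PosSemidef := by
    intro l
    have : E l = (E l)ᴴ * E l := by rw [hEherm l, hEe l]
    rw [this]
    exact posSemidef_conjTranspose_mul_self _
  -- A * E l = P l i₁ • E l
  have hAE : ∀ l, G.adjMatrix ℝ * E l = P l i₁ • E l := by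
    intro l
    rw [hi₁, hP i₁, Finset.sum_mul]
    simp only [smul_mul_assoc, hEmul, smul_ite, smul_zero]
    rw [Finset.sum_ite_eq' Finset.univ l (fun m => P m i₁ • E m)]
    simp
  -- A - lam • 1 is PSD
  have hMpsd : (G.adjMatrix ℝ - lam • 1).PosSemidef := by
    have h1 : G.adjMatrix ℝ - lam • (1 : Matrix V V ℝ) = ∑ l, (P l i₁ - lam) • E l := by
      rw [hi₁, hP i₁, ← hEsum, Finset.smul_sum, ← Finset.sum_sub_distrib]
      exact Finset.sum_congr rfl fun l _ => by rw [sub_smul]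
    rw [h1]
    exact psd_sum_aux _ _ fun l _ => psd_smul_aux (sub_nonneg.mpr (hl₀ l)) (hEpsd l)
  -- lam = inf of eigenvalues
  have hlam_le : ∀ i, lam ≤ hherm.eigenvalues i := eig_le_of_psd_aux hherm lam hMpsd
  have htrEpos : 0 < (E l₀).trace := trace_pos_aux (hEsym l₀) (hEe l₀) (hEne l₀)
  have lam_eq : lam = ⨅ i, hherm.eigenvalues i := by
    refine le_antisymm (le_ciInf hlam_le) ?_
    have hpsd := psd_sub_smul_aux hherm
    have h0 := psd_trace_mul_nonneg_aux hpsd (hEpsd l₀)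
    have h1 : (G.adjMatrix ℝ - (⨅ i, hherm.eigenvalues i) • 1) * E l₀
        = (lam - ⨅ i, hherm.eigenvalues i) • E l₀ := by
      rw [sub_mul, hAE l₀, smul_mul_assoc, one_mul, ← hlam, sub_smul]
    rw [h1, trace_smul, smul_eq_mul] at h0
    nlinarith
  rw [← lam_eq]
  -- lam ≤ 0
  have hlam0 : lam ≤ 0 := by
    have htr : ∑ i, hherm.eigenvalues i = 0 := by
      rw [← trace_eq_sum_eig_aux hherm]
      exact SimpleGraph.trace_adjMatrix (α := ℝ) G
    by_contra hc
    push_neg at hc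
    have : (0:ℝ) < ∑ i, hherm.eigenvalues i :=
      Finset.sum_pos (fun i _ => lt_of_lt_of_le hc (hlam_le i)) Finset.univ_nonempty
    rw [htr] at this
    exact lt_irrefl 0 this
  have hkl : 0 < (k:ℝ) - lam := by linarith
  set μs : ℝ := 2 * (k:ℝ) / ((k:ℝ) - lam) with hμs
  have hμs0 : 0 ≤ μs := by positivity
  -- entries of E l₀
  set q0 : ℝ := (n:ℝ)⁻¹ * Q 0 l₀ with hq0def
  set q1 : ℝ := (n:ℝ)⁻¹ * Q i₁ l₀ with hq1def
  have hdiagE : ∀ u, E l₀ u u = q0 := by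
    intro u
    rw [hQ l₀]
    simp only [Matrix.smul_apply, Matrix.sum_apply, smul_eq_mul, ← hn]
    rw [hq0def]
    congr 1
    rw [Finset.sum_eq_single 0]
    · rw [hA0]; simp [Matrix.one_apply_eq]
    · intro j _ hj; rw [hdiag j hj u, mul_zero]
    · simp
  have hedgeE : ∀ u v, G.Adj u v → E l₀ u v = q1 := by
    intro u v huv
    rw [hQ l₀]
    simp only [Matrix.smul_apply, Matrix.sum_apply, smul_eq_mul, ← hn]
    rw [hq1def]
    congr 1
    rw [Finset.sum_eq_single i₁]
    · rw [hedgeA u v huv, mul_one]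
    · intro j _ hj; rw [hedge u v huv j hj, mul_zero]
    · simp
  have htrE : (E l₀).trace = (n:ℝ) * q0 := by
    rw [Matrix.trace]
    simp only [Matrix.diag_apply]
    rw [Finset.sum_congr rfl fun u _ => hdiagE u, Finset.sum_const, Finset.card_univ,
      nsmul_eq_mul, hn]
  have hq0pos : 0 < q0 := by
    rw [htrE] at htrEpos
    by_contra hc
    push_neg at hc
    nlinarith [show (0:ℝ) < (n:ℝ) by exact_mod_cast hn0]
  -- relation k q1 = lam q0
  have hrel : (k:ℝ) * q1 = lam * q0 := by
    obtain ⟨u0⟩ := ‹Nonempty V›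
    have h5 : (G.adjMatrix ℝ * E l₀) u0 u0 = (P l₀ i₁ • E l₀) u0 u0 := by rw [hAE l₀]
    rw [Matrix.mul_apply, Matrix.smul_apply, smul_eq_mul, ← hlam, hdiagE u0] at h5
    have h6 : ∑ v, G.adjMatrix ℝ u0 v * E l₀ v u0 = ∑ v, (if G.Adj u0 v then q1 else 0) := by
      refine Finset.sum_congr rfl fun v _ => ?_
      by_cases hadj : G.Adj u0 v
      · rw [if_pos hadj]
        have : E l₀ v u0 = q1 := hedgeE v u0 (G.adj_symm hadj)
        simp [hadj, this]
      · simp [hadj]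
    rw [h6] at h5
    rw [← Finset.sum_filter, Finset.sum_const] at h5
    have hcard : (Finset.univ.filter (fun v => G.Adj u0 v)).card = k := by
      rw [← hreg u0, SimpleGraph.degree]
      congr 1
      ext v
      simp [SimpleGraph.mem_neighborFinset]
    rw [hcard, nsmul_eq_mul] at h5
    exact h5
  -- membership: the optimal matrix
  have hmem : μs ∈ {μ : ℝ | 0 ≤ μ ∧ ∃ N : Matrix V V ℝ, N.PosSemidef ∧ (∀ v, N v v = μ) ∧
      ∀ u v, G.Adj u v → N u u + N v v - 2 * N u v ≥ 4} := by
    refine ⟨hμs0, (μs / q0) • E l₀, psd_smul_aux (by positivity) (hEpsd l₀), ?_, ?_⟩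
    · intro v
      rw [Matrix.smul_apply, hdiagE v, smul_eq_mul, div_mul_cancel₀ _ (ne_of_gt hq0pos)]
    · intro u v huv
      have hq1val : q1 = lam * q0 / k := by
        field_simp at hrel ⊢
        linarith
      simp only [Matrix.smul_apply, smul_eq_mul]
      rw [hdiagE u, hdiagE v, hedgeE u v huv, hq1val]
      have : μs / q0 * q0 = μs := div_mul_cancel₀ _ (ne_of_gt hq0pos)
      rw [this]
      have h7 : μs / q0 * (lam * q0 / k) = μs * lam / k := by
        field_simp
      rw [h7, hμs]
      rw [ge_iff_le]
      have : 2 * (k:ℝ) / ((k:ℝ) - lam) + 2 * (k:ℝ) / ((k:ℝ) - lam)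
          - 2 * (2 * (k:ℝ) / ((k:ℝ) - lam) * lam / (k:ℝ)) = 4 := by
        field_simp
        ring
      linarith
  -- lower bound
  have hlb : ∀ μ ∈ {μ : ℝ | 0 ≤ μ ∧ ∃ N : Matrix V V ℝ, N.PosSemidef ∧ (∀ v, N v v = μ) ∧
      ∀ u v, G.Adj u v → N u u + N v v - 2 * N u v ≥ 4}, μs ≤ μ := by
    rintro μ ⟨hμ0, N, hNpsd, hNdiag, hNedge⟩
    have hNs : ∀ u v, N v u = N u v := by
      intro u v
      have := congrFun (congrFun hNpsd.1 u) v
      rw [conjTranspose_apply, star_trivial] at this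
      exact this
    have hrow : ∀ u, ∑ v, G.adjMatrix ℝ u v = (k:ℝ) := by
      intro u
      simp only [SimpleGraph.adjMatrix_apply]
      rw [Finset.sum_boole]
      have hcard : (Finset.univ.filter (fun v => G.Adj u v)).card = k := by
        rw [← hreg u, SimpleGraph.degree]
        congr 1
        ext v
        simp [SimpleGraph.mem_neighborFinset]
      rw [hcard]
    have hAdsym : ∀ u v, G.adjMatrix ℝ u v = G.adjMatrix ℝ v u := by
      intro u v
      simp [SimpleGraph.adjMatrix_apply, G.adj_comm u v]
    have htrN : N.trace = (n:ℝ) * μ := by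
      rw [Matrix.trace]
      simp only [Matrix.diag_apply]
      rw [Finset.sum_congr rfl fun u _ => hNdiag u, Finset.sum_const, Finset.card_univ,
        nsmul_eq_mul, hn]
    set t : ℝ := (G.adjMatrix ℝ * N).trace with ht
    have h6 : lam * ((n:ℝ) * μ) ≤ t := by
      have h0 := psd_trace_mul_nonneg_aux hMpsd hNpsd
      rw [sub_mul, smul_mul_assoc, one_mul, trace_sub, trace_smul, smul_eq_mul, htrN] at h0
      linarith
    -- edge sum bound
    have h7 : 4 * ((n:ℝ) * k) ≤ 2 * (k:ℝ) * ((n:ℝ) * μ) - 2 * t := by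
      have hsum1 : ∑ u, ∑ v, G.adjMatrix ℝ u v * 4
          ≤ ∑ u, ∑ v, G.adjMatrix ℝ u v * (N u u + N v v - 2 * N u v) := by
        refine Finset.sum_le_sum fun u _ => Finset.sum_le_sum fun v _ => ?_
        by_cases hadj : G.Adj u v
        · simp only [SimpleGraph.adjMatrix_apply, if_pos hadj, one_mul]
          exact hNedge u v hadj
        · simp [hadj]
      have hlhs : ∑ u, ∑ v, G.adjMatrix ℝ u v * 4 = 4 * ((n:ℝ) * k) := by
        have : ∀ u, ∑ v, G.adjMatrix ℝ u v * 4 = (k:ℝ) * 4 := by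
          intro u
          rw [← Finset.sum_mul, hrow u]
        rw [Finset.sum_congr rfl fun u _ => this u, Finset.sum_const, Finset.card_univ,
          nsmul_eq_mul, ← hn]
        ring
      have hrhs : ∑ u, ∑ v, G.adjMatrix ℝ u v * (N u u + N v v - 2 * N u v)
          = 2 * (k:ℝ) * ((n:ℝ) * μ) - 2 * t := by
        have hexp : ∀ u v, G.adjMatrix ℝ u v * (N u u + N v v - 2 * N u v)
            = G.adjMatrix ℝ u v * N u u + G.adjMatrix ℝ u v * N v v
              - 2 * (G.adjMatrix ℝ u v * N v u) := by
          intro u v; rw [hNs u v]; ring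
        simp only [hexp]
        rw [Finset.sum_congr rfl fun u _ => Finset.sum_sub_distrib _ _,
          Finset.sum_congr rfl fun u _ => congrArg₂ (· - ·)
            (Finset.sum_add_distrib : _) rfl]
        rw [Finset.sum_sub_distrib, Finset.sum_add_distrib]
        have hT1 : ∑ u, ∑ v, G.adjMatrix ℝ u v * N u u = (k:ℝ) * ((n:ℝ) * μ) := by
          have : ∀ u, ∑ v, G.adjMatrix ℝ u v * N u u = (k:ℝ) * μ := by
            intro u
            rw [← Finset.sum_mul, hrow u, hNdiag u]
          rw [Finset.sum_congr rfl fun u _ => this u, Finset.sum_const, Finset.card_univ,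
            nsmul_eq_mul, ← hn]
          ring
        have hT2 : ∑ u, ∑ v, G.adjMatrix ℝ u v * N v v = (k:ℝ) * ((n:ℝ) * μ) := by
          rw [Finset.sum_comm]
          have hcol : ∀ v, ∑ u, G.adjMatrix ℝ u v * N v v = (k:ℝ) * μ := by
            intro v
            have hc : ∑ u, G.adjMatrix ℝ u v = (k:ℝ) := by
              rw [Finset.sum_congr rfl fun u _ => hAdsym u v]
              exact hrow v
            rw [← Finset.sum_mul, hc, hNdiag v]
          rw [Finset.sum_congr rfl fun v _ => hcol v, Finset.sum_const, Finset.card_univ,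
            nsmul_eq_mul, ← hn]
          ring
        have hT3 : ∑ u, ∑ v, 2 * (G.adjMatrix ℝ u v * N v u) = 2 * t := by
          rw [ht, Matrix.trace]
          simp only [Matrix.diag_apply, Matrix.mul_apply]
          rw [Finset.mul_sum]
          refine Finset.sum_congr rfl fun u _ => ?_
          rw [Finset.mul_sum]
        rw [hT1, hT2, hT3]
        ring
      rw [← hlhs, ← hrhs] at *
      linarith [hsum1]
    have hnpos : (0:ℝ) < n := by exact_mod_cast hn0
    rw [hμs, div_le_iff₀ hkl]
    nlinarith
  exact le_antisymm (csInf_le ⟨μs, fun x hx => hlb x hx⟩ hmem) (le_csInf ⟨μs, hmem⟩ hlb)
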